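/- arXiv:2205.06857 — 2 statements merged into one kernel-verified Lean document; each statement's English description precedes it below -/
import Mathlib

section
/- In the depth-2 gerrymandering instance constructed from a Set Cover instance (U,F,t) in which every element belongs to exactly d ≥ 3 sets: for any district-partition 𝒟 of G into k = t+3 districts, if the preferred candidate p does not win the district of 𝒟 containing the root r, then 𝒟 is not satisfying for p (that is, some candidate other than p leads at least as many districts as p wins). -/
attribute [local instance] Classical.propDecidable

/-- Candidate `c` *leads* district `D` (unweighted): `c`'s vote count is at least that of
every candidate. -/
def leadsIn {V C : Type*} (χ : V → C) (c : C) (D : Finset V) : Prop :=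
  ∀ c' : C, (D.filter fun x => χ x = c').card ≤ (D.filter fun x => χ x = c).card

/-- Candidate `c` *wins* district `D` (unweighted): `c`'s vote count strictly exceeds that of
every other candidate. -/
def winsIn {V C : Type*} (χ : V → C) (c : C) (D : Finset V) : Prop :=
  ∀ c' : C, c' ≠ c → (D.filter fun x => χ x = c').card < (D.filter fun x => χ x = c).card

/-- A district-partition of `G` into `k` districts: `k` pairwise-disjoint nonempty vertex sets
covering all vertices, each inducing a connected subgraph. -/
def IsDistrictPartition {V : Type*} (G : SimpleGraph V) (k : ℕ) (P : Finset (Finset V)) : Prop :=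
  P.card = k ∧ (∀ D ∈ P, D.Nonempty) ∧
    (∀ D ∈ P, ∀ D' ∈ P, D ≠ D' → Disjoint D D') ∧
    (∀ x : V, ∃ D ∈ P, x ∈ D) ∧
    (∀ D ∈ P, (G.induce (D : Set V)).Connected)

/-- A district-partition is *satisfying* for the preferred candidate `p` if `p` wins strictly
more districts than any other candidate leads. -/
def SatisfyingFor {V C : Type*} (χ : V → C) (p : C) (P : Finset (Finset V)) : Prop :=
  ∀ q : C, q ≠ p →
    (P.filter fun D => leadsIn χ q D).card < (P.filter fun D => winsIn χ p D).card

/-- Vertices of the depth-2 gerrymandering instance: the root `r`, weight-branch vertices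
`w_i, w'_i` for `i ∈ [d]`, set-branch vertices `s_i, s'_i` for `i ∈ [m]`, and element leaves
`v^j_l` for `j ∈ [n]`, `l ∈ [d]`. -/
inductive V2 (n m d : ℕ) : Type where
  | root
  | w (i : Fin d)
  | w' (i : Fin d)
  | s (i : Fin m)
  | s' (i : Fin m)
  | v (j : Fin n) (l : Fin d)
  deriving DecidableEq, Fintype

/-- Candidates of the depth-2 instance: preferred candidate `p`, adversary `q`,
element candidates `a_j`, and set candidates `b_i`. -/
inductive C2 (n m : ℕ) : Type where
  | p
  | q
  | a (j : Fin n)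
  | b (i : Fin m)
  deriving DecidableEq

/-- Candidate preferences of the depth-2 instance. -/
def chi2 {n m d : ℕ} : V2 n m d → C2 n m
  | .root => .p
  | .w _ => .p
  | .w' _ => .q
  | .s i => .b i
  | .s' i => .b i
  | .v j _ => .a j

/-- The depth-2 tree: the root is adjacent to each `w_i` and each `s_i`; `w'_i` is attached to
`w_i`; `s'_i` is attached to `s_i`; and the leaf `v^j_l` is attached to `s_{att j l}`, where
`att j` enumerates (bijectively) the sets containing element `e_j`. -/
def G2 {n m d : ℕ} (att : Fin n → Fin d → Fin m) : SimpleGraph (V2 n m d) :=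
  SimpleGraph.fromRel (fun x y =>
    (x = V2.root ∧ ∃ i, y = V2.w i) ∨
    (∃ i, x = V2.w i ∧ y = V2.w' i) ∨
    (x = V2.root ∧ ∃ i, y = V2.s i) ∨
    (∃ i, x = V2.s i ∧ y = V2.s' i) ∨
    (∃ j l, x = V2.s (att j l) ∧ y = V2.v j l))

lemma adj_w {n m d : ℕ} (att : Fin n → Fin d → Fin m) (i : Fin d) (x : V2 n m d) :
    (G2 att).Adj (V2.w i) x ↔ x = V2.root ∨ x = V2.w' i := by
  simp [G2, SimpleGraph.fromRel_adj]
  aesop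

lemma adj_w' {n m d : ℕ} (att : Fin n → Fin d → Fin m) (i : Fin d) (x : V2 n m d) :
    (G2 att).Adj (V2.w' i) x ↔ x = V2.w i := by
  simp [G2, SimpleGraph.fromRel_adj]
  aesop

lemma closureWD {n m d : ℕ} (att : Fin n → Fin d → Fin m) (D : Finset (V2 n m d))
    (hconn : ((G2 att).induce (D : Set (V2 n m d))).Connected)
    (hroot : V2.root ∉ D) (i : Fin d) (hi : V2.w i ∈ D) :
    ∀ x ∈ D, x = V2.w i ∨ x = V2.w' i := by
  intro x hx
  have hr := hconn.preconnected ⟨V2.w i, hi⟩ ⟨x, hx⟩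
  obtain ⟨wlk⟩ := hr
  have key : ∀ (u v : (D : Set (V2 n m d))),
      ((G2 att).induce (D : Set (V2 n m d))).Walk u v →
      ((u : V2 n m d) = V2.w i ∨ (u : V2 n m d) = V2.w' i) →
      ((v : V2 n m d) = V2.w i ∨ (v : V2 n m d) = V2.w' i) := by
    intro u v wlk
    induction wlk with
    | nil => exact fun h => h
    | cons h p ih =>
      rename_i a b c
      intro ha
      apply ih
      have hadj : (G2 att).Adj (a : V2 n m d) (b : V2 n m d) := h
      rcases ha with ha | ha
      · rw [ha] at hadj
        rcases (adj_w att i _).1 hadj with hb | hb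
        · exact absurd (hb ▸ b.2) hroot
        · exact Or.inr hb
      · rw [ha] at hadj
        exact Or.inl ((adj_w' att i _).1 hadj)
  exact key _ _ wlk (Or.inl rfl)

lemma eq_singleton_of_no_nbr {n m d : ℕ} (att : Fin n → Fin d → Fin m)
    (D : Finset (V2 n m d))
    (hconn : ((G2 att).induce (D : Set (V2 n m d))).Connected)
    (x : V2 n m d) (hx : x ∈ D)
    (h : ∀ y, (G2 att).Adj x y → y ∉ D) : D = {x} := by
  apply Finset.eq_singleton_iff_unique_mem.2
  refine ⟨hx, fun z hz => ?_⟩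
  have hr := hconn.preconnected ⟨x, hx⟩ ⟨z, hz⟩
  obtain ⟨wlk⟩ := hr
  cases wlk with
  | nil => rfl
  | cons hadj p =>
    rename_i b
    exact absurd b.2 (h b hadj)


/-- Observation 2 of the paper.  In the depth-2 gerrymandering instance
constructed from a Set Cover instance `(U, F, t)` in which every element belongs to exactly
`d ≥ 3` sets: for any district-partition `𝒟` of `G` into `k = t + 3` districts, if the
preferred candidate `p` does not win the district of `𝒟` containing the root `r`, then `𝒟`
is not satisfying for `p`. -/
theorem depth2_win_root (n m d t : ℕ) (hd : 3 ≤ d) (htm : t ≤ m)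
    (S : Fin m → Finset (Fin n))
    (hfreq : ∀ j : Fin n, (Finset.univ.filter fun i => j ∈ S i).card = d)
    (att : Fin n → Fin d → Fin m)
    (hattmem : ∀ j l, j ∈ S (att j l))
    (hattinj : ∀ j, Function.Injective (att j))
    (P : Finset (Finset (V2 n m d)))
    (hP : IsDistrictPartition (G2 att) (t + 3) P)
    (hlose : ∀ D ∈ P, V2.root ∈ D → ¬ winsIn chi2 C2.p D) :
    ¬ SatisfyingFor chi2 C2.p P := by
  obtain ⟨hcard, hne, hdisj, hcover, hconn⟩ := hP
  intro hsat
  have fe : ∀ (c : C2 n m) (s : Finset (V2 n m d)),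
      (@Finset.filter _ (fun x => chi2 x = c) (fun a => Classical.propDecidable _) s)
      = s.filter (fun x => chi2 x = c) := by intro c s; congr!
  -- every district won by p is a singleton {w i}
  have hwin_shape : ∀ D ∈ P, winsIn chi2 C2.p D → ∃ i : Fin d, D = {V2.w i} := by
    intro D hD hwin
    have hroot : V2.root ∉ D := fun h => hlose D hD h hwin
    -- D contains a p-vertex
    obtain ⟨x, hx⟩ := hne D hD
    have hp_pos : 0 < (D.filter fun y => chi2 y = C2.p).card := by
      by_contra h
      push_neg at h
      interval_cases h' : (D.filter fun y => chi2 y = C2.p).card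
      · by_cases hxp : chi2 x = C2.p
        · have : x ∈ D.filter fun y => chi2 y = C2.p := Finset.mem_filter.2 ⟨hx, hxp⟩
          simp_all [Finset.card_eq_zero]
        · have h1 : 0 < (D.filter fun y => chi2 y = chi2 x).card :=
            Finset.card_pos.2 ⟨x, Finset.mem_filter.2 ⟨hx, rfl⟩⟩
          have h2 := hwin (chi2 x) hxp
          rw [fe, fe] at h2
          omega
    obtain ⟨y, hy⟩ := Finset.card_pos.1 hp_pos
    obtain ⟨hyD, hyp⟩ := Finset.mem_filter.1 hy
    -- y is root or some w i
    obtain ⟨i, hi⟩ : ∃ i : Fin d, y = V2.w i := by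
      cases y with
      | root => exact absurd hyD hroot
      | w i => exact ⟨i, rfl⟩
      | w' i => simp [chi2] at hyp
      | s i => simp [chi2] at hyp
      | s' i => simp [chi2] at hyp
      | v j l => simp [chi2] at hyp
    subst hi
    have hsub := closureWD att D (hconn D hD) hroot i hyD
    refine ⟨i, ?_⟩
    -- if w' i ∈ D then p does not win (tie with q)
    have hw' : V2.w' i ∉ D := by
      intro hw'
      have hq : D.filter (fun x => chi2 x = C2.q) = {V2.w' i} := by
        apply Finset.eq_singleton_iff_unique_mem.2
        refine ⟨Finset.mem_filter.2 ⟨hw', rfl⟩, fun z hz => ?_⟩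
        obtain ⟨hzD, hzq⟩ := Finset.mem_filter.1 hz
        rcases hsub z hzD with h | h
        · subst h; simp [chi2] at hzq
        · exact h
      have hp : D.filter (fun x => chi2 x = C2.p) = {V2.w i} := by
        apply Finset.eq_singleton_iff_unique_mem.2
        refine ⟨Finset.mem_filter.2 ⟨hyD, rfl⟩, fun z hz => ?_⟩
        obtain ⟨hzD, hzq⟩ := Finset.mem_filter.1 hz
        rcases hsub z hzD with h | h
        · exact h
        · subst h; simp [chi2] at hzq
      have hqq := hwin C2.q (by simp)
      rw [fe, fe] at hqq
      rw [hq, hp] at hqq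
      simp at hqq
    apply Finset.eq_singleton_iff_unique_mem.2
    refine ⟨hyD, fun z hz => ?_⟩
    rcases hsub z hz with h | h
    · exact h
    · exact absurd (h ▸ hz) hw'
  -- the injection: D = {w i} ↦ {w' i}
  classical
  set f : Finset (V2 n m d) → Finset (V2 n m d) :=
    fun D => if h : ∃ i : Fin d, D = {V2.w i} then {V2.w' h.choose} else ∅ with hf
  have hmaps : ∀ D ∈ P.filter (fun D => winsIn chi2 C2.p D),
      f D ∈ P.filter (fun D => leadsIn chi2 C2.q D) := by
    intro D hD
    obtain ⟨hDP, hDwin⟩ := Finset.mem_filter.1 hD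
    have hex := hwin_shape D hDP hDwin
    rw [hf]; simp only [dif_pos hex]
    set i := hex.choose with hi
    have hDeq : D = {V2.w i} := hex.choose_spec
    -- district containing w' i
    obtain ⟨D', hD'P, hw'D'⟩ := hcover (V2.w' i)
    have hDD' : D ≠ D' := by
      intro h; rw [← h, hDeq] at hw'D'; simp at hw'D'
    have hwi : V2.w i ∉ D' := by
      intro h
      have := hdisj D hDP D' hD'P hDD'
      exact Finset.disjoint_left.1 this (hDeq ▸ (by simp : V2.w i ∈ ({V2.w i} : Finset _))) h
    have hD'eq : D' = {V2.w' i} := by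
      apply eq_singleton_of_no_nbr att D' (hconn D' hD'P) (V2.w' i) hw'D'
      intro y hy
      rw [adj_w' att i y] at hy
      subst hy; exact hwi
    have : leadsIn chi2 C2.q D' := by
      intro c'
      rw [fe, fe, hD'eq]
      have : ({V2.w' i} : Finset (V2 n m d)).filter (fun x => chi2 x = C2.q) = {V2.w' i} := by
        exact Finset.eq_singleton_iff_unique_mem.2 ⟨Finset.mem_filter.2 ⟨Finset.mem_singleton_self _, rfl⟩, fun z hz => Finset.mem_singleton.1 (Finset.mem_filter.1 hz).1⟩
      rw [this]
      calc (({V2.w' i} : Finset (V2 n m d)).filter fun x => chi2 x = c').card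
          ≤ ({V2.w' i} : Finset (V2 n m d)).card := Finset.card_filter_le _ _
        _ = 1 := by simp
        _ = ({V2.w' i} : Finset (V2 n m d)).card := by simp
    rw [← hD'eq]
    exact Finset.mem_filter.2 ⟨hD'P, this⟩
  have hinj : Set.InjOn f (P.filter (fun D => winsIn chi2 C2.p D)) := by
    intro D1 h1 D2 h2 heq
    obtain ⟨h1P, h1w⟩ := Finset.mem_filter.1 h1
    obtain ⟨h2P, h2w⟩ := Finset.mem_filter.1 h2
    have e1 := hwin_shape D1 h1P h1w
    have e2 := hwin_shape D2 h2P h2w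
    rw [hf] at heq
    simp only [dif_pos e1, dif_pos e2] at heq
    have : e1.choose = e2.choose := by
      have := Finset.singleton_injective heq
      injection this
    rw [e1.choose_spec, e2.choose_spec, this]
  have hle := Finset.card_le_card_of_injOn f hmaps hinj
  have := hsat C2.q (by simp)
  omega
end

section
/- In the subdivided-star gerrymandering instance constructed from a Set Cover instance (U,F,t): for any district-partition 𝒟 of G into k = t+4 districts, if the candidate q does not win the district of 𝒟 containing the root r, then 𝒟 is not satisfying for the preferred candidate p (that is, some candidate other than p leads at least as many districts as p wins). -/
attribute [local instance] Classical.propDecidable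

/-- Vertices of the subdivided-star gerrymandering instance: the root `r`; branch 1 vertices
`c_1, c_2, u_1, …, u_n`; branch 2 vertices `w_1, …, w_{t-1}`; and, on each of the `t`
selection branches `s`, the initial vertices `v_0^1, …, v_0^n` (constructor `v0`), the group
vertices `x_i` and `v_i^j` for `i ∈ [m]` (group `g_i`), and the final vertices
`y_0, …, y_m`. -/
inductive VS (n m t : ℕ) : Type where
  | root
  | c1
  | c2
  | u (j : Fin n)
  | w (i : Fin (t - 1))
  | v0 (s : Fin t) (j : Fin n)
  | x (s : Fin t) (i : Fin m)
  | v (s : Fin t) (i : Fin m) (j : Fin n)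
  | y (s : Fin t) (i : Fin (m + 1))
  deriving DecidableEq, Fintype

/-- Candidates of the subdivided-star instance: the preferred candidate `p`, the ally `q`,
element candidates `a_j` for `j ∈ [n]`, and branch candidates `b_s` for `s ∈ [t]`. -/
inductive CS (n t : ℕ) : Type where
  | p
  | q
  | a (j : Fin n)
  | b (s : Fin t)
  deriving DecidableEq

/-- Candidate preferences of the subdivided-star instance. -/
def chiS {n m t : ℕ} : VS n m t → CS n t
  | .root => .q
  | .c1 => .p
  | .c2 => .p
  | .u j => .a j
  | .w _ => .q
  | .v0 _ j => .a j
  | .x _ _ => .q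
  | .v _ _ j => .a j
  | .y s _ => .b s

/-- Position of each non-root vertex along its branch, as a pair
(branch index, 0-based distance from the root along the branch minus one); the vertex at
position 0 of each branch is adjacent to the root.  Branch 0 is `c_1, c_2, u_1, …, u_n`;
branch 1 is `w_1, …, w_{t-1}`; branch `2 + s` is selection branch `s`, ordered as
`v_0^1, …, v_0^n`, then groups `g_1, …, g_m` (group `g_i` consists of the vertices `v_i^j`
with `e_j ∉ S_i` in increasing order of `j`, then `x_i`, then the vertices `v_i^j` with
`e_j ∈ S_i` in increasing order of `j`), then `y_0, …, y_m`. -/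
def posS {n m t : ℕ} (S : Fin m → Finset (Fin n)) : VS n m t → Option (ℕ × ℕ)
  | .root => none
  | .c1 => some (0, 0)
  | .c2 => some (0, 1)
  | .u j => some (0, 2 + (j : ℕ))
  | .w i => some (1, (i : ℕ))
  | .v0 s j => some (2 + (s : ℕ), (j : ℕ))
  | .x s i => some (2 + (s : ℕ), n + (i : ℕ) * (n + 1) + (n - (S i).card))
  | .v s i j => some (2 + (s : ℕ), n + (i : ℕ) * (n + 1) +
      (if j ∈ S i then n - (S i).card + 1 + ((S i).filter fun j' => j' < j).card
       else ((S i)ᶜ.filter fun j' => j' < j).card))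
  | .y s i => some (2 + (s : ℕ), n + m * (n + 1) + (i : ℕ))

/-- The subdivided star: the root is adjacent to the vertex at position 0 of each branch, and
vertices at consecutive positions of the same branch are adjacent. -/
def GS {n m t : ℕ} (S : Fin m → Finset (Fin n)) : SimpleGraph (VS n m t) :=
  SimpleGraph.fromRel (fun a b =>
    (a = VS.root ∧ ∃ br, posS S b = some (br, 0)) ∨
    (∃ br k, posS S a = some (br, k) ∧ posS S b = some (br, k + 1)))

section AuxArith

private lemma mulb {m n : ℕ} (i : Fin m) : (i:ℕ)*(n+1) + (n+1) ≤ m*(n+1) := by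
  have h1 : ((i:ℕ)+1)*(n+1) ≤ m*(n+1) := Nat.mul_le_mul_right _ (Nat.succ_le_of_lt i.isLt)
  have h2 : ((i:ℕ)+1)*(n+1) = (i:ℕ)*(n+1)+(n+1) := by ring
  omega

private lemma grp_inj {N : ℕ} {i i' o o' : ℕ} (ho : o ≤ N) (ho' : o' ≤ N)
    (h : i*(N+1)+o = i'*(N+1)+o') : i = i' ∧ o = o' := by
  rcases lt_trichotomy i i' with hlt | rfl | hgt
  · exfalso
    have h1 : (i+1)*(N+1) ≤ i'*(N+1) := Nat.mul_le_mul_right _ (Nat.succ_le_of_lt hlt)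
    have h2 : (i+1)*(N+1) = i*(N+1)+(N+1) := by ring
    omega
  · omega
  · exfalso
    have h1 : (i'+1)*(N+1) ≤ i*(N+1) := Nat.mul_le_mul_right _ (Nat.succ_le_of_lt hgt)
    have h2 : (i'+1)*(N+1) = i'*(N+1)+(N+1) := by ring
    omega

end AuxArith

section OffLemmas

variable {n m : ℕ} {S : Fin m → Finset (Fin n)}

lemma card_le_n (i : Fin m) : (S i).card ≤ n := by
  simpa using Finset.card_le_univ (S i)

lemma filtc_lt {i : Fin m} {j : Fin n} (h : j ∉ S i) :
    (((S i)ᶜ).filter fun j' => j' < j).card < n - (S i).card := by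
  have h1 : (((S i)ᶜ).filter fun j' => j' < j).card < ((S i)ᶜ).card :=
    Finset.card_lt_card (Finset.filter_ssubset.mpr ⟨j, Finset.mem_compl.mpr h, by simp⟩)
  have h2 : ((S i)ᶜ).card = n - (S i).card := by
    rw [Finset.card_compl]; simp
  omega

lemma filts_lt {i : Fin m} {j : Fin n} (h : j ∈ S i) :
    ((S i).filter fun j' => j' < j).card < (S i).card :=
  Finset.card_lt_card (Finset.filter_ssubset.mpr ⟨j, h, by simp⟩)

lemma offv_le (i : Fin m) (j : Fin n) :
    (if j ∈ S i then n - (S i).card + 1 + ((S i).filter fun j' => j' < j).card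
     else (((S i)ᶜ).filter fun j' => j' < j).card) ≤ n := by
  split_ifs with h
  · have := filts_lt h; have := card_le_n (S := S) i; omega
  · have := filtc_lt h; omega

lemma offv_ne (i : Fin m) (j : Fin n) :
    (if j ∈ S i then n - (S i).card + 1 + ((S i).filter fun j' => j' < j).card
     else (((S i)ᶜ).filter fun j' => j' < j).card) ≠ n - (S i).card := by
  split_ifs with h
  · omega
  · have := filtc_lt h; omega

lemma filter_lt_inj {s : Finset (Fin n)} {j j' : Fin n} (hj : j ∈ s) (hj' : j' ∈ s)
    (h : (s.filter fun x => x < j).card = (s.filter fun x => x < j').card) : j = j' := by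
  have key : ∀ (a b : Fin n), a ∈ s → a < b →
      (s.filter fun x => x < a).card < (s.filter fun x => x < b).card := by
    intro a b haS hab
    apply Finset.card_lt_card
    refine (Finset.ssubset_iff_of_subset ?_).mpr ⟨a, Finset.mem_filter.mpr ⟨haS, hab⟩, by simp⟩
    intro x hx
    obtain ⟨hxs, hxa⟩ := Finset.mem_filter.mp hx
    exact Finset.mem_filter.mpr ⟨hxs, hxa.trans hab⟩
  rcases lt_trichotomy j j' with hlt | heq | hgt
  · exact absurd h (key j j' hj hlt).ne
  · exact heq
  · exact absurd h.symm (key j' j hj' hgt).ne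

lemma offv_inj (i : Fin m) {j j' : Fin n}
    (h : (if j ∈ S i then n - (S i).card + 1 + ((S i).filter fun x => x < j).card
          else (((S i)ᶜ).filter fun x => x < j).card)
       = (if j' ∈ S i then n - (S i).card + 1 + ((S i).filter fun x => x < j').card
          else (((S i)ᶜ).filter fun x => x < j').card)) : j = j' := by
  by_cases hj : j ∈ S i <;> by_cases hj' : j' ∈ S i <;> simp [hj, hj'] at h
  · exact filter_lt_inj hj hj' (by omega)
  · exfalso; have := filtc_lt hj'; omega
  · exfalso; have := filtc_lt hj; omega
  · exact filter_lt_inj (Finset.mem_compl.mpr hj) (Finset.mem_compl.mpr hj') h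

end OffLemmas

lemma posS_inj {n m t : ℕ} {S : Fin m → Finset (Fin n)} {a b : VS n m t} {pr : ℕ × ℕ}
    (ha' : posS S a = some pr) (hb : posS S b = some pr) : a = b := by
  have ha : posS S a = posS S b := by rw [ha', hb]
  clear ha' hb
  cases a with
  | root => cases b <;> simp_all [posS]
  | c1 => cases b <;> first
      | rfl
      | (simp only [posS, Option.some.injEq, Prod.mk.injEq] at ha; omega)
      | (simp [posS] at ha)
  | c2 => cases b <;> first
      | rfl
      | (simp only [posS, Option.some.injEq, Prod.mk.injEq] at ha; omega)
      | (simp [posS] at ha)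
  | u j => cases b with
    | root => simp [posS] at ha
    | u j' =>
        simp only [posS, Option.some.injEq, Prod.mk.injEq] at ha
        rw [show j = j' from Fin.val_injective (by omega)]
    | c1 => simp only [posS, Option.some.injEq, Prod.mk.injEq] at ha; omega
    | c2 => simp only [posS, Option.some.injEq, Prod.mk.injEq] at ha; omega
    | w i => simp only [posS, Option.some.injEq, Prod.mk.injEq] at ha; omega
    | v0 s j2 => simp only [posS, Option.some.injEq, Prod.mk.injEq] at ha; omega
    | x s i => simp only [posS, Option.some.injEq, Prod.mk.injEq] at ha; omega
    | v s i j2 => simp only [posS, Option.some.injEq, Prod.mk.injEq] at ha; omega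
    | y s i => simp only [posS, Option.some.injEq, Prod.mk.injEq] at ha; omega
  | w i => cases b with
    | root => simp [posS] at ha
    | w i' =>
        simp only [posS, Option.some.injEq, Prod.mk.injEq] at ha
        rw [show i = i' from Fin.val_injective (by omega)]
    | c1 => simp only [posS, Option.some.injEq, Prod.mk.injEq] at ha; omega
    | c2 => simp only [posS, Option.some.injEq, Prod.mk.injEq] at ha; omega
    | u j => simp only [posS, Option.some.injEq, Prod.mk.injEq] at ha; omega
    | v0 s j2 => simp only [posS, Option.some.injEq, Prod.mk.injEq] at ha; omega
    | x s i2 => simp only [posS, Option.some.injEq, Prod.mk.injEq] at ha; omega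
    | v s i2 j2 => simp only [posS, Option.some.injEq, Prod.mk.injEq] at ha; omega
    | y s i2 => simp only [posS, Option.some.injEq, Prod.mk.injEq] at ha; omega
  | v0 s j => cases b with
    | root => simp [posS] at ha
    | c1 => simp only [posS, Option.some.injEq, Prod.mk.injEq] at ha; omega
    | c2 => simp only [posS, Option.some.injEq, Prod.mk.injEq] at ha; omega
    | u j2 => simp only [posS, Option.some.injEq, Prod.mk.injEq] at ha; omega
    | w i2 => simp only [posS, Option.some.injEq, Prod.mk.injEq] at ha; omega
    | v0 s' j' =>
        simp only [posS, Option.some.injEq, Prod.mk.injEq] at ha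
        rw [show s = s' from Fin.val_injective (by omega),
            show j = j' from Fin.val_injective (by omega)]
    | x s' i' =>
        exfalso; simp only [posS, Option.some.injEq, Prod.mk.injEq] at ha
        have := j.isLt; omega
    | v s' i' j' =>
        exfalso; simp only [posS, Option.some.injEq, Prod.mk.injEq] at ha
        have := j.isLt; omega
    | y s' i' =>
        exfalso; simp only [posS, Option.some.injEq, Prod.mk.injEq] at ha
        have := j.isLt; omega
  | x s i => cases b with
    | root => simp [posS] at ha
    | c1 => simp only [posS, Option.some.injEq, Prod.mk.injEq] at ha; omega
    | c2 => simp only [posS, Option.some.injEq, Prod.mk.injEq] at ha; omega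
    | u j2 => simp only [posS, Option.some.injEq, Prod.mk.injEq] at ha; omega
    | w i2 => simp only [posS, Option.some.injEq, Prod.mk.injEq] at ha; omega
    | v0 s' j' =>
        exfalso; simp only [posS, Option.some.injEq, Prod.mk.injEq] at ha
        have := j'.isLt; omega
    | x s' i' =>
        simp only [posS, Option.some.injEq, Prod.mk.injEq] at ha
        have h2 : (i:ℕ)*(n+1) + (n - (S i).card) = (i':ℕ)*(n+1) + (n - (S i').card) := by omega
        obtain ⟨hii, -⟩ := grp_inj (Nat.sub_le n _) (Nat.sub_le n _) h2
        rw [show s = s' from Fin.val_injective (by omega),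
            show i = i' from Fin.val_injective hii]
    | v s' i' j' =>
        exfalso
        simp only [posS, Option.some.injEq, Prod.mk.injEq] at ha
        have h4 := offv_le (S := S) i' j'
        have h2 : (i:ℕ)*(n+1) + (n - (S i).card)
            = (i':ℕ)*(n+1) + (if j' ∈ S i' then n - (S i').card + 1 +
                ((S i').filter fun x => x < j').card
              else (((S i')ᶜ).filter fun x => x < j').card) := by omega
        obtain ⟨hii, ho⟩ := grp_inj (Nat.sub_le n _) h4 h2
        obtain rfl : i = i' := Fin.val_injective hii
        exact offv_ne i j' ho.symm
    | y s' i' =>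
        exfalso; simp only [posS, Option.some.injEq, Prod.mk.injEq] at ha
        have h1 := mulb (n := n) i
        have h2 : (S i).card ≤ n := card_le_n i
        omega
  | v s i j => cases b with
    | root => simp [posS] at ha
    | c1 => simp only [posS, Option.some.injEq, Prod.mk.injEq] at ha; omega
    | c2 => simp only [posS, Option.some.injEq, Prod.mk.injEq] at ha; omega
    | u j2 => simp only [posS, Option.some.injEq, Prod.mk.injEq] at ha; omega
    | w i2 => simp only [posS, Option.some.injEq, Prod.mk.injEq] at ha; omega
    | v0 s' j' =>
        exfalso; simp only [posS, Option.some.injEq, Prod.mk.injEq] at ha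
        have := j'.isLt; omega
    | x s' i' =>
        exfalso
        simp only [posS, Option.some.injEq, Prod.mk.injEq] at ha
        have h4 := offv_le (S := S) i j
        have h2 : (i:ℕ)*(n+1) + (if j ∈ S i then n - (S i).card + 1 +
                ((S i).filter fun x => x < j).card
              else (((S i)ᶜ).filter fun x => x < j).card)
            = (i':ℕ)*(n+1) + (n - (S i').card) := by omega
        obtain ⟨hii, ho⟩ := grp_inj h4 (Nat.sub_le n _) h2
        obtain rfl : i = i' := Fin.val_injective hii
        exact offv_ne i j ho
    | v s' i' j' =>
        simp only [posS, Option.some.injEq, Prod.mk.injEq] at ha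
        have h4 := offv_le (S := S) i j
        have h5 := offv_le (S := S) i' j'
        have h2 : (i:ℕ)*(n+1) + (if j ∈ S i then n - (S i).card + 1 +
                ((S i).filter fun x => x < j).card
              else (((S i)ᶜ).filter fun x => x < j).card)
            = (i':ℕ)*(n+1) + (if j' ∈ S i' then n - (S i').card + 1 +
                ((S i').filter fun x => x < j').card
              else (((S i')ᶜ).filter fun x => x < j').card) := by omega
        obtain ⟨hii, ho⟩ := grp_inj h4 h5 h2
        obtain rfl : i = i' := Fin.val_injective hii
        rw [show s = s' from Fin.val_injective (by omega),
            show j = j' from offv_inj i ho]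
    | y s' i' =>
        exfalso; simp only [posS, Option.some.injEq, Prod.mk.injEq] at ha
        have h1 := mulb (n := n) i
        have h4 := offv_le (S := S) i j
        omega
  | y s i => cases b with
    | root => simp [posS] at ha
    | c1 => simp only [posS, Option.some.injEq, Prod.mk.injEq] at ha; omega
    | c2 => simp only [posS, Option.some.injEq, Prod.mk.injEq] at ha; omega
    | u j2 => simp only [posS, Option.some.injEq, Prod.mk.injEq] at ha; omega
    | w i2 => simp only [posS, Option.some.injEq, Prod.mk.injEq] at ha; omega
    | v0 s' j' =>
        exfalso; simp only [posS, Option.some.injEq, Prod.mk.injEq] at ha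
        have := j'.isLt; omega
    | x s' i' =>
        exfalso; simp only [posS, Option.some.injEq, Prod.mk.injEq] at ha
        have h1 := mulb (n := n) i'
        have h2 : (S i').card ≤ n := card_le_n i'
        omega
    | v s' i' j' =>
        exfalso; simp only [posS, Option.some.injEq, Prod.mk.injEq] at ha
        have h1 := mulb (n := n) i'
        have h4 := offv_le (S := S) i' j'
        omega
    | y s' i' =>
        simp only [posS, Option.some.injEq, Prod.mk.injEq] at ha
        rw [show s = s' from Fin.val_injective (by omega),
            show i = i' from Fin.val_injective (by omega)]


lemma adj_u {n m t : ℕ} {S : Fin m → Finset (Fin n)} {j : Fin n} {b : VS n m t}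
    (h : (GS S).Adj (VS.u j) b) : b = VS.c2 ∨ ∃ j', b = VS.u j' := by
  simp only [GS, SimpleGraph.fromRel_adj] at h
  obtain ⟨-, h | h⟩ := h
  · rcases h with ⟨h1, -⟩ | ⟨br, k, h1, h2⟩
    · exact absurd h1 (by simp)
    · simp only [posS, Option.some.injEq, Prod.mk.injEq] at h1
      obtain ⟨hbr, hk⟩ := h1
      cases b with
      | root => simp [posS] at h2
      | c1 => exfalso; simp only [posS, Option.some.injEq, Prod.mk.injEq] at h2; omega
      | c2 => exfalso; simp only [posS, Option.some.injEq, Prod.mk.injEq] at h2; omega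
      | u j' => exact Or.inr ⟨j', rfl⟩
      | w i => exfalso; simp only [posS, Option.some.injEq, Prod.mk.injEq] at h2; omega
      | v0 s j2 => exfalso; simp only [posS, Option.some.injEq, Prod.mk.injEq] at h2; omega
      | x s i => exfalso; simp only [posS, Option.some.injEq, Prod.mk.injEq] at h2; omega
      | v s i j2 => exfalso; simp only [posS, Option.some.injEq, Prod.mk.injEq] at h2; omega
      | y s i => exfalso; simp only [posS, Option.some.injEq, Prod.mk.injEq] at h2; omega
  · rcases h with ⟨h1, br, h2⟩ | ⟨br, k, h1, h2⟩
    · exfalso; simp only [posS, Option.some.injEq, Prod.mk.injEq] at h2; omega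
    · simp only [posS, Option.some.injEq, Prod.mk.injEq] at h2
      obtain ⟨hbr, hk⟩ := h2
      cases b with
      | root => simp [posS] at h1
      | c1 => exfalso; simp only [posS, Option.some.injEq, Prod.mk.injEq] at h1; omega
      | c2 => exact Or.inl rfl
      | u j' => exact Or.inr ⟨j', rfl⟩
      | w i => exfalso; simp only [posS, Option.some.injEq, Prod.mk.injEq] at h1; omega
      | v0 s j2 => exfalso; simp only [posS, Option.some.injEq, Prod.mk.injEq] at h1; omega
      | x s i => exfalso; simp only [posS, Option.some.injEq, Prod.mk.injEq] at h1; omega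
      | v s i j2 => exfalso; simp only [posS, Option.some.injEq, Prod.mk.injEq] at h1; omega
      | y s i => exfalso; simp only [posS, Option.some.injEq, Prod.mk.injEq] at h1; omega

lemma uclosed_aux {n m t : ℕ} {S : Fin m → Finset (Fin n)} {U : Finset (VS n m t)}
    (hc2 : VS.c2 ∉ U) (a zz : (U : Set (VS n m t)))
    (w : ((GS S).induce (U : Set (VS n m t))).Walk a zz) :
    ∀ j : Fin n, a.1 = VS.u j → ∃ j', zz.1 = VS.u j' := by
  induction w with
  | nil => intro j hj; exact ⟨j, hj⟩
  | cons h p ih =>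
    intro j hj
    rename_i a1 b1 zz1
    have hadj : (GS S).Adj a1.1 b1.1 := h
    rw [hj] at hadj
    rcases adj_u hadj with hbc2 | ⟨j', hbj⟩
    · exact absurd (show VS.c2 ∈ U by rw [← hbc2]; exact b1.2) hc2
    · exact ih j' hbj

lemma prefix_aux {n m t : ℕ} {S : Fin m → Finset (Fin n)} {U : Finset (VS n m t)}
    {v : VS n m t} {br kv : ℕ} (hpv : posS S v = some (br, kv))
    (zz rt : (U : Set (VS n m t)))
    (w : ((GS S).induce (U : Set (VS n m t))).Walk zz rt) :
    ∀ kz : ℕ, rt.1 = VS.root → posS S zz.1 = some (br, kz) → kv ≤ kz → v ∈ U := by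
  induction w with
  | nil => intro kz hrt hpz _; rw [hrt] at hpz; simp [posS] at hpz
  | cons h p ih =>
    intro kz hrt hpz hle
    rename_i z1 b1 rt1
    have hadj : (GS S).Adj z1.1 b1.1 := h
    simp only [GS, SimpleGraph.fromRel_adj] at hadj
    obtain ⟨-, hrel⟩ := hadj
    rcases hrel with (⟨hzr, -⟩ | ⟨br2, k2, h1, h2⟩) | (⟨-, br2, h0⟩ | ⟨br2, k2, h1, h2⟩)
    · rw [hzr] at hpz; simp [posS] at hpz
    · rw [hpz] at h1
      obtain ⟨h3, h4⟩ : br = br2 ∧ kz = k2 := by simpa using h1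
      rw [← h3, ← h4] at h2
      exact ih (kz + 1) hrt h2 (by omega)
    · rw [hpz] at h0
      obtain ⟨-, h3⟩ : br = br2 ∧ kz = 0 := by simpa using h0
      have h4 : kv = kz := by omega
      rw [h4] at hpv
      rw [posS_inj hpv hpz]
      exact z1.2
    · rw [hpz] at h2
      obtain ⟨h3, h4⟩ : br = br2 ∧ kz = k2 + 1 := by simpa using h2
      by_cases h5 : kv ≤ k2
      · rw [← h3] at h1
        exact ih k2 hrt h1 h5
      · have h6 : kv = kz := by omega
        rw [h6] at hpv
        rw [posS_inj hpv hpz]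
        exact z1.2

lemma prefix_mem {n m t : ℕ} {S : Fin m → Finset (Fin n)} {U : Finset (VS n m t)}
    (hc : ((GS S).induce (U : Set (VS n m t))).Connected) (hroot : VS.root ∈ U)
    {z v : VS n m t} (hz : z ∈ U) {br kz kv : ℕ}
    (hpz : posS S z = some (br, kz)) (hpv : posS S v = some (br, kv)) (hle : kv ≤ kz) :
    v ∈ U := by
  obtain ⟨w⟩ := hc.preconnected ⟨z, by simpa using hz⟩ ⟨VS.root, by simpa using hroot⟩
  exact prefix_aux hpv _ _ w kz rfl hpz hle


lemma chiS_eq_p_iff {n m t : ℕ} (x : VS n m t) :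
    chiS x = CS.p ↔ x = VS.c1 ∨ x = VS.c2 := by
  cases x <;> simp [chiS]

lemma chiS_eq_b {n m t : ℕ} {s : Fin t} (x : VS n m t) (hx : chiS x = CS.b s) :
    ∃ i, x = VS.y s i := by
  cases x <;> simp [chiS] at hx
  case y s' i => exact ⟨i, by rw [hx]⟩

noncomputable def cntC {n m t : ℕ} (D : Finset (VS n m t)) (c : CS n t) : ℕ :=
  (@Finset.filter _ (fun x => chiS x = c) (fun a => Classical.propDecidable _) D).card

lemma leadsIn_iff {n m t : ℕ} {c : CS n t} {D : Finset (VS n m t)} :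
    leadsIn chiS c D ↔ ∀ c', cntC D c' ≤ cntC D c := Iff.rfl

lemma winsIn_iff {n m t : ℕ} {c : CS n t} {D : Finset (VS n m t)} :
    winsIn chiS c D ↔ ∀ c', c' ≠ c → cntC D c' < cntC D c := Iff.rfl

lemma cntC_eq {n m t : ℕ} (D : Finset (VS n m t)) (c : CS n t) :
    cntC D c = (D.filter fun x => chiS x = c).card := by
  unfold cntC; congr!

lemma cntC_lb {n m t : ℕ} {D : Finset (VS n m t)} {c : CS n t} (A : Finset (VS n m t))
    (hA : ∀ x ∈ A, x ∈ D) (hAc : ∀ x ∈ A, chiS x = c) : A.card ≤ cntC D c := by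
  rw [cntC_eq]
  exact Finset.card_le_card fun x hx => Finset.mem_filter.mpr ⟨hA x hx, hAc x hx⟩

lemma cntC_ub {n m t : ℕ} {D : Finset (VS n m t)} {c : CS n t} (B : Finset (VS n m t))
    (hB : ∀ x ∈ D, chiS x = c → x ∈ B) : cntC D c ≤ B.card := by
  rw [cntC_eq]
  refine Finset.card_le_card fun x hx => ?_
  obtain ⟨h1, h2⟩ := Finset.mem_filter.mp hx
  exact hB x h1 h2

lemma cntC_pos {n m t : ℕ} {D : Finset (VS n m t)} {c : CS n t} (h : 0 < cntC D c) :
    ∃ x ∈ D, chiS x = c := by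
  rw [cntC_eq] at h
  obtain ⟨x, hx⟩ := Finset.card_pos.mp h
  exact ⟨x, (Finset.mem_filter.mp hx).1, (Finset.mem_filter.mp hx).2⟩

lemma cntC_zero {n m t : ℕ} {D : Finset (VS n m t)} {c : CS n t}
    (h : ∀ x ∈ D, chiS x ≠ c) : cntC D c = 0 := by
  rw [cntC_eq, Finset.card_eq_zero, Finset.filter_eq_empty_iff]
  exact h

lemma cntC_one_le {n m t : ℕ} {D : Finset (VS n m t)} {c : CS n t} {x : VS n m t}
    (hx : x ∈ D) (hc : chiS x = c) : 1 ≤ cntC D c := by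
  rw [cntC_eq]
  exact Finset.card_pos.mpr ⟨x, Finset.mem_filter.mpr ⟨hx, hc⟩⟩

lemma cntC_le_one {n m t : ℕ} {D : Finset (VS n m t)} {c : CS n t}
    (h : ∀ x ∈ D, ∀ y ∈ D, chiS x = c → chiS y = c → x = y) : cntC D c ≤ 1 := by
  rw [cntC_eq]
  refine Finset.card_le_one.mpr fun x hx y hy => ?_
  obtain ⟨hx1, hx2⟩ := Finset.mem_filter.mp hx
  obtain ⟨hy1, hy2⟩ := Finset.mem_filter.mp hy
  exact h x hx1 y hy1 hx2 hy2

noncomputable def leaderOf {n m t : ℕ} (D : Finset (VS n m t)) : CS n t :=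
  if h : D.Nonempty then
    chiS (Finset.exists_max_image D (fun x => cntC D (chiS x)) h).choose
  else CS.p

lemma leaderOf_spec {n m t : ℕ} {D : Finset (VS n m t)} (h : D.Nonempty) :
    (∃ x ∈ D, chiS x = leaderOf D) ∧ leadsIn chiS (leaderOf D) D := by
  unfold leaderOf
  rw [dif_pos h]
  obtain ⟨hmem, hmax⟩ :=
    (Finset.exists_max_image D (fun x => cntC D (chiS x)) h).choose_spec
  refine ⟨⟨_, hmem, rfl⟩, ?_⟩
  rw [leadsIn_iff]
  intro c'
  by_cases hc : ∃ y ∈ D, chiS y = c'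
  · obtain ⟨y, hy, rfl⟩ := hc
    exact hmax y hy
  · have h0 : cntC D c' = 0 := cntC_zero fun x hx hxc => hc ⟨x, hx, hxc⟩
    omega


/-- Observation 3 of the paper.  In the subdivided-star gerrymandering
instance constructed from a Set Cover instance `(U, F, t)`: for any district-partition `𝒟`
of `G` into `k = t + 4` districts, if the ally `q` does not win the district of `𝒟`
containing the root `r`, then `𝒟` is not satisfying for the preferred candidate `p`. -/
theorem star_q_must_win_root (n m t : ℕ) (htm : t ≤ m)
    (S : Fin m → Finset (Fin n))
    (hcov : ∀ j : Fin n, ∃ i : Fin m, j ∈ S i)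
    (P : Finset (Finset (VS n m t)))
    (hP : IsDistrictPartition (GS S) (t + 4) P)
    (hlose : ∀ D ∈ P, VS.root ∈ D → ¬ winsIn chiS CS.q D) :
    ¬ SatisfyingFor chiS CS.p P := by
  intro hsat
  obtain ⟨hcard, hne, hdisj, hcovP, hconn⟩ := hP
  -- every district winning for p contains a p-voter
  have hpvot : ∀ D : Finset (VS n m t), winsIn chiS CS.p D → ∃ x ∈ D, chiS x = CS.p := by
    intro D hD
    have h1 := (winsIn_iff.mp hD) CS.q (fun h => nomatch h)
    exact cntC_pos (by omega)
  -- any subfamily of P whose members contain a p-voter has at most 2 members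
  have hkey2 : ∀ Q : Finset (Finset (VS n m t)), Q ⊆ P →
      (∀ D ∈ Q, ∃ x ∈ D, chiS x = CS.p) → Q.card ≤ 2 := by
    intro Q hQP hvp
    have h2 : ({VS.c1, VS.c2} : Finset (VS n m t)).card = 2 :=
      Finset.card_pair (by simp)
    have := Finset.card_le_card_of_injOn (s := Q)
      (fun D : Finset (VS n m t) => if h : ∃ x ∈ D, chiS x = CS.p then h.choose else VS.root)
      (t := ({VS.c1, VS.c2} : Finset (VS n m t))) ?_ ?_
    · omega
    · intro D hD
      simp only
      rw [dif_pos (hvp D hD)]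
      obtain ⟨hmem, hchi⟩ := (hvp D hD).choose_spec
      rcases (chiS_eq_p_iff _).mp hchi with h | h <;> rw [h] <;> simp
    · intro D hD D' hD' hEq
      simp only [Finset.mem_coe] at hD hD'
      by_contra hne'
      simp only at hEq
      rw [dif_pos (hvp D hD), dif_pos (hvp D' hD')] at hEq
      obtain ⟨hmem, -⟩ := (hvp D hD).choose_spec
      obtain ⟨hmem', -⟩ := (hvp D' hD').choose_spec
      rw [hEq] at hmem
      exact Finset.disjoint_left.mp (hdisj D (hQP hD) D' (hQP hD') hne') hmem hmem'
  have hW2 : (P.filter fun D => winsIn chiS CS.p D).card ≤ 2 :=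
    hkey2 _ (Finset.filter_subset _ _)
      (fun D hD => hpvot D (Finset.mem_filter.mp hD).2)
  have hWpos : 1 ≤ (P.filter fun D => winsIn chiS CS.p D).card := by
    have := hsat CS.q (fun h => nomatch h); omega
  -- at least t+2 districts avoid both c1 and c2
  have hfree : t + 2 ≤ (P.filter fun D => ¬(VS.c1 ∈ D ∨ VS.c2 ∈ D)).card := by
    have h1 := Finset.card_filter_add_card_filter_not
      (s := P) (p := fun D => VS.c1 ∈ D ∨ VS.c2 ∈ D)
    have h2 : (P.filter fun D => VS.c1 ∈ D ∨ VS.c2 ∈ D).card ≤ 2 := by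
      apply hkey2 _ (Finset.filter_subset _ _)
      intro D hD
      rcases (Finset.mem_filter.mp hD).2 with h | h
      · exact ⟨VS.c1, h, rfl⟩
      · exact ⟨VS.c2, h, rfl⟩
    omega
  -- the number of districts won by p is exactly 2
  have hW2eq : (P.filter fun D => winsIn chiS CS.p D).card = 2 := by
    rcases (by omega : (P.filter fun D => winsIn chiS CS.p D).card = 1 ∨
        (P.filter fun D => winsIn chiS CS.p D).card = 2) with h1 | h2
    · exfalso
      obtain ⟨D, hD⟩ := Finset.card_pos.mp
        (by omega : 0 < (P.filter fun D => ¬(VS.c1 ∈ D ∨ VS.c2 ∈ D)).card)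
      obtain ⟨hDP, hDnc⟩ := Finset.mem_filter.mp hD
      obtain ⟨⟨x, hxD, hxeq⟩, hDlead⟩ := leaderOf_spec (hne D hDP)
      have hLp : leaderOf D ≠ CS.p := by
        intro he; rw [he] at hxeq
        rcases (chiS_eq_p_iff x).mp hxeq with rfl | rfl
        · exact hDnc (Or.inl hxD)
        · exact hDnc (Or.inr hxD)
      have h3 := hsat (leaderOf D) hLp
      have h4 : 1 ≤ (P.filter fun E => leadsIn chiS (leaderOf D) E).card :=
        Finset.card_pos.mpr ⟨D, Finset.mem_filter.mpr ⟨hDP, hDlead⟩⟩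
      omega
    · exact h2
  have hleadle : ∀ c : CS n t, c ≠ CS.p →
      (P.filter fun D => leadsIn chiS c D).card ≤ 1 := by
    intro c hc
    have := hsat c hc
    omega
  -- a district won by p containing a but not b equals {a}
  have hsingleton : ∀ (F : Finset (VS n m t)) (a b : VS n m t), winsIn chiS CS.p F →
      a ∈ F → b ∉ F → (∀ x : VS n m t, chiS x = CS.p ↔ (x = a ∨ x = b)) → F = {a} := by
    intro F a b hwin haF hbF hiff
    have hcnt : cntC F CS.p ≤ 1 := by
      refine cntC_le_one ?_
      intro x hx y hy hxp hyp
      rcases (hiff x).mp hxp with rfl | rfl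
      · rcases (hiff y).mp hyp with rfl | rfl
        · rfl
        · exact absurd hy hbF
      · exact absurd hx hbF
    refine Finset.eq_singleton_iff_unique_mem.mpr ⟨haF, ?_⟩
    intro z hzF
    by_contra hza
    have hzp : chiS z ≠ CS.p := by
      intro hp; rcases (hiff z).mp hp with rfl | rfl
      · exact hza rfl
      · exact hbF hzF
    have h1 : 1 ≤ cntC F (chiS z) := cntC_one_le hzF rfl
    have h2 := (winsIn_iff.mp hwin) (chiS z) hzp
    omega
  have hkeyP : ({VS.c1} : Finset (VS n m t)) ∈ P ∧ ({VS.c2} : Finset (VS n m t)) ∈ P := by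
    obtain ⟨E1, E2, hE12ne, hWpair⟩ := Finset.card_eq_two.mp hW2eq
    have hE1m : E1 ∈ P.filter fun D => winsIn chiS CS.p D := by rw [hWpair]; simp
    have hE2m : E2 ∈ P.filter fun D => winsIn chiS CS.p D := by rw [hWpair]; simp
    obtain ⟨hE1P, hE1w⟩ := Finset.mem_filter.mp hE1m
    obtain ⟨hE2P, hE2w⟩ := Finset.mem_filter.mp hE2m
    obtain ⟨x1, hx1E, hx1p⟩ := hpvot E1 hE1w
    obtain ⟨x2, hx2E, hx2p⟩ := hpvot E2 hE2w
    have hdisjE := hdisj E1 hE1P E2 hE2P hE12ne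
    have hx12 : x1 ≠ x2 := fun he => (Finset.disjoint_left.mp hdisjE hx1E) (he ▸ hx2E)
    rcases (chiS_eq_p_iff x1).mp hx1p with rfl | rfl <;>
      rcases (chiS_eq_p_iff x2).mp hx2p with rfl | rfl
    · exact absurd rfl hx12
    · have h1 : E1 = {VS.c1} := hsingleton E1 VS.c1 VS.c2 hE1w hx1E
        (fun hc => Finset.disjoint_left.mp hdisjE hc hx2E) chiS_eq_p_iff
      have h2 : E2 = {VS.c2} := hsingleton E2 VS.c2 VS.c1 hE2w hx2E
        (fun hc => Finset.disjoint_left.mp hdisjE hx1E hc)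
        (fun x => (chiS_eq_p_iff x).trans or_comm)
      exact ⟨h1 ▸ hE1P, h2 ▸ hE2P⟩
    · have h1 : E2 = {VS.c1} := hsingleton E2 VS.c1 VS.c2 hE2w hx2E
        (fun hc => Finset.disjoint_left.mp hdisjE hx1E hc) chiS_eq_p_iff
      have h2 : E1 = {VS.c2} := hsingleton E1 VS.c2 VS.c1 hE1w hx1E
        (fun hc => Finset.disjoint_left.mp hdisjE hc hx2E)
        (fun x => (chiS_eq_p_iff x).trans or_comm)
      exact ⟨h1 ▸ hE2P, h2 ▸ hE1P⟩
    · exact absurd rfl hx12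
  obtain ⟨hc1P, hc2P⟩ := hkeyP
  have hnotmem : ∀ (D : Finset (VS n m t)) (v w : VS n m t), D ∈ P →
      ({v} : Finset (VS n m t)) ∈ P → w ∈ D → w ≠ v → v ∉ D := by
    intro D v w hDP hvP hwD hwv hvD
    have hne' : D ≠ {v} := fun he => hwv (by rw [he] at hwD; simpa using hwD)
    exact Finset.disjoint_left.mp (hdisj D hDP {v} hvP hne') hvD (Finset.mem_singleton_self v)
  obtain ⟨Dr, hDrP, hrootDr⟩ := hcovP VS.root
  have hc1Dr : VS.c1 ∉ Dr := hnotmem Dr VS.c1 VS.root hDrP hc1P hrootDr (by simp)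
  have hc2Dr : VS.c2 ∉ Dr := hnotmem Dr VS.c2 VS.root hDrP hc2P hrootDr (by simp)
  have hpDr : cntC Dr CS.p = 0 := by
    refine cntC_zero ?_
    intro x hx hxp
    rcases (chiS_eq_p_iff x).mp hxp with rfl | rfl
    · exact hc1Dr hx
    · exact hc2Dr hx
  have hqDr1 : 1 ≤ cntC Dr CS.q := cntC_one_le hrootDr rfl
  rcases Nat.eq_zero_or_pos n with hn0 | hn0
  · -- n = 0 : too few possible leaders
    have hmaps : ∀ D ∈ (P.filter fun D => ¬(VS.c1 ∈ D ∨ VS.c2 ∈ D)),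
        leaderOf D ∈ insert CS.q (Finset.univ.image (CS.b : Fin t → CS n t)) := by
      intro D hD
      obtain ⟨hDP, hDnc⟩ := Finset.mem_filter.mp hD
      obtain ⟨⟨x, hxD, hxeq⟩, -⟩ := leaderOf_spec (hne D hDP)
      cases hx : leaderOf D with
      | p =>
        exfalso; rw [hx] at hxeq
        rcases (chiS_eq_p_iff x).mp hxeq with rfl | rfl
        · exact hDnc (Or.inl hxD)
        · exact hDnc (Or.inr hxD)
      | q => exact Finset.mem_insert_self _ _
      | a j => exact absurd j.isLt (by omega)
      | b s => exact Finset.mem_insert_of_mem (Finset.mem_image_of_mem _ (Finset.mem_univ s))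
    have hinj : Set.InjOn leaderOf
        (↑(P.filter fun D => ¬(VS.c1 ∈ D ∨ VS.c2 ∈ D)) : Set (Finset (VS n m t))) := by
      intro D hD D' hD' hEq
      simp only [Finset.mem_coe] at hD hD'
      obtain ⟨hDP, hDnc⟩ := Finset.mem_filter.mp hD
      obtain ⟨hD'P, hD'nc⟩ := Finset.mem_filter.mp hD'
      by_contra hne'
      obtain ⟨⟨x, hxD, hxeq⟩, hDlead⟩ := leaderOf_spec (hne D hDP)
      obtain ⟨-, hD'lead⟩ := leaderOf_spec (hne D' hD'P)
      have hLp : leaderOf D ≠ CS.p := by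
        intro he; rw [he] at hxeq
        rcases (chiS_eq_p_iff x).mp hxeq with rfl | rfl
        · exact hDnc (Or.inl hxD)
        · exact hDnc (Or.inr hxD)
      rw [← hEq] at hD'lead
      have hsub : ({D, D'} : Finset (Finset (VS n m t))) ⊆
          P.filter fun E => leadsIn chiS (leaderOf D) E := by
        intro E hE
        rcases Finset.mem_insert.mp hE with rfl | hE
        · exact Finset.mem_filter.mpr ⟨hDP, hDlead⟩
        · rw [Finset.mem_singleton.mp hE]
          exact Finset.mem_filter.mpr ⟨hD'P, hD'lead⟩
      have h3 := Finset.card_le_card hsub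
      rw [Finset.card_pair hne'] at h3
      have h4 := hleadle (leaderOf D) hLp
      omega
    have h5 := Finset.card_le_card_of_injOn leaderOf hmaps hinj
    have h6 : (insert CS.q (Finset.univ.image (CS.b : Fin t → CS n t))).card ≤ t + 1 := by
      refine le_trans (Finset.card_insert_le _ _) ?_
      have h7 := Finset.card_image_le (f := (CS.b : Fin t → CS n t))
        (s := (Finset.univ : Finset (Fin t)))
      simp only [Finset.card_univ, Fintype.card_fin] at h7
      omega
    omega
  · -- n ≥ 1
    have j0 : Fin n := ⟨0, hn0⟩
    -- no a-candidate can lead the root district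
    have starContra : ∀ j : Fin n, leadsIn chiS (CS.a j) Dr → False := by
      intro j hjlead
      obtain ⟨Uj, hUjP, hujU⟩ := hcovP (VS.u j)
      have hc2Uj : VS.c2 ∉ Uj := hnotmem Uj VS.c2 (VS.u j) hUjP hc2P hujU (by simp)
      have hUall : ∀ z ∈ Uj, ∃ j', z = VS.u j' := by
        intro z hzU
        obtain ⟨w⟩ := (hconn Uj hUjP).preconnected ⟨VS.u j, by simpa using hujU⟩
          ⟨z, by simpa using hzU⟩
        exact uclosed_aux hc2Uj _ _ w j rfl
      have hUlead : leadsIn chiS (CS.a j) Uj := by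
        rw [leadsIn_iff]
        intro c'
        have h1 : cntC Uj c' ≤ 1 := by
          refine cntC_le_one ?_
          intro x hx y hy hxc hyc
          obtain ⟨jx, rfl⟩ := hUall x hx
          obtain ⟨jy, rfl⟩ := hUall y hy
          have h2 : CS.a jx = CS.a jy := hxc.trans hyc.symm
          simp only [CS.a.injEq] at h2
          rw [h2]
        have h2 : 1 ≤ cntC Uj (CS.a j) := cntC_one_le hujU rfl
        omega
      have hUjDr : Uj ≠ Dr := by
        intro he
        obtain ⟨j', hj'⟩ := hUall VS.root (he ▸ hrootDr)
        exact absurd hj' (by simp)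
      have hsub : ({Uj, Dr} : Finset (Finset (VS n m t))) ⊆
          P.filter fun E => leadsIn chiS (CS.a j) E := by
        intro E hE
        rcases Finset.mem_insert.mp hE with rfl | hE
        · exact Finset.mem_filter.mpr ⟨hUjP, hUlead⟩
        · rw [Finset.mem_singleton.mp hE]
          exact Finset.mem_filter.mpr ⟨hDrP, hjlead⟩
      have h3 := Finset.card_le_card hsub
      rw [Finset.card_pair hUjDr] at h3
      have h4 := hleadle (CS.a j) (fun h => nomatch h)
      omega
    -- no b-candidate can lead the root district
    have hbFalse : ∀ s : Fin t, leadsIn chiS (CS.b s) Dr → False := by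
      intro s hbl
      have hqb := leadsIn_iff.mp hbl CS.q
      obtain ⟨z, hzDr, hzb⟩ := cntC_pos (D := Dr) (c := CS.b s) (by omega)
      obtain ⟨i0, rfl⟩ := chiS_eq_b z hzb
      have hconnDr := hconn Dr hDrP
      have hx_mem : ∀ i : Fin m, VS.x s i ∈ Dr := by
        intro i
        refine prefix_mem (z := VS.y s i0) (v := VS.x s i) hconnDr hrootDr hzDr rfl rfl ?_
        have h1 := mulb (n := n) i
        have h2 : (S i).card ≤ n := card_le_n i
        omega
      have hxinj : Function.Injective (fun i : Fin m => (VS.x s i : VS n m t)) := by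
        intro a b h; simpa using h
      have hq_ge : m + 1 ≤ cntC Dr CS.q := by
        have h1 : (insert VS.root (Finset.univ.image fun i : Fin m =>
            (VS.x s i : VS n m t))).card = m + 1 := by
          rw [Finset.card_insert_of_notMem (by simp),
            Finset.card_image_of_injective _ hxinj, Finset.card_univ, Fintype.card_fin]
        rw [← h1]
        refine cntC_lb _ ?_ ?_ <;> intro z2 hz2 <;>
          rcases Finset.mem_insert.mp hz2 with rfl | hz2
        · exact hrootDr
        · obtain ⟨i, -, rfl⟩ := Finset.mem_image.mp hz2; exact hx_mem i
        · rfl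
        · obtain ⟨i, -, rfl⟩ := Finset.mem_image.mp hz2; rfl
      have hb_le : cntC Dr (CS.b s) ≤ m + 1 := by
        have h2 : (Finset.univ.image (VS.y s : Fin (m+1) → VS n m t)).card ≤ m + 1 := by
          have h3 := Finset.card_image_le (f := (VS.y s : Fin (m+1) → VS n m t))
            (s := (Finset.univ : Finset (Fin (m+1))))
          simp only [Finset.card_univ, Fintype.card_fin] at h3
          omega
        refine le_trans (cntC_ub _ ?_) h2
        intro z2 hz2 hz2b
        obtain ⟨i, rfl⟩ := chiS_eq_b z2 hz2b
        exact Finset.mem_image_of_mem _ (Finset.mem_univ i)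
      have hv0 : VS.v0 s j0 ∈ Dr := by
        refine prefix_mem (z := VS.y s i0) (v := VS.v0 s j0) hconnDr hrootDr hzDr rfl rfl ?_
        have := j0.isLt; omega
      have hv : ∀ i : Fin m, VS.v s i j0 ∈ Dr := by
        intro i
        refine prefix_mem (z := VS.y s i0) (v := VS.v s i j0) hconnDr hrootDr hzDr rfl rfl ?_
        have h1 := mulb (n := n) i
        have h2 := offv_le (S := S) i j0
        omega
      have hvinj : Function.Injective (fun i : Fin m => (VS.v s i j0 : VS n m t)) := by
        intro a b h; simpa using h
      have ha_ge : m + 1 ≤ cntC Dr (CS.a j0) := by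
        have h1 : (insert (VS.v0 s j0) (Finset.univ.image fun i : Fin m =>
            (VS.v s i j0 : VS n m t))).card = m + 1 := by
          rw [Finset.card_insert_of_notMem (by simp),
            Finset.card_image_of_injective _ hvinj, Finset.card_univ, Fintype.card_fin]
        rw [← h1]
        refine cntC_lb _ ?_ ?_ <;> intro z2 hz2 <;>
          rcases Finset.mem_insert.mp hz2 with rfl | hz2
        · exact hv0
        · obtain ⟨i, -, rfl⟩ := Finset.mem_image.mp hz2; exact hv i
        · rfl
        · obtain ⟨i, -, rfl⟩ := Finset.mem_image.mp hz2; rfl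
      have hfin : leadsIn chiS (CS.a j0) Dr := by
        rw [leadsIn_iff]
        intro c'
        have h1 := leadsIn_iff.mp hbl c'
        have h2 := leadsIn_iff.mp hbl (CS.a j0)
        omega
      exact starContra j0 hfin
    -- leader analysis for the root district
    obtain ⟨⟨x0, hx0Dr, hx0eq⟩, hlead⟩ := leaderOf_spec (⟨VS.root, hrootDr⟩ : Dr.Nonempty)
    cases hL : leaderOf Dr with
    | p =>
      rw [hL] at hx0eq
      rcases (chiS_eq_p_iff x0).mp hx0eq with rfl | rfl
      · exact hc1Dr hx0Dr
      · exact hc2Dr hx0Dr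
    | q =>
      rw [hL] at hlead
      have hnot := hlose Dr hDrP hrootDr
      rw [winsIn_iff] at hnot
      push_neg at hnot
      obtain ⟨c', hc'q, hcge⟩ := hnot
      have hc'lead : leadsIn chiS c' Dr :=
        leadsIn_iff.mpr fun c'' => le_trans (leadsIn_iff.mp hlead c'') hcge
      cases c' with
      | p => omega
      | q => exact hc'q rfl
      | a j => exact starContra j hc'lead
      | b s => exact hbFalse s hc'lead
    | a j => exact starContra j (hL ▸ hlead)
    | b s => exact hbFalse s (hL ▸ hlead)
end
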